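/- Let (a_k)_{k≥2} be a sequence of nonnegative reals, C₁ ≥ 0, and p ∈ (0, 1/3). If for every k ≥ 2 we have (k²/4)·a_k ≤ C₁ + (p/(1-p))·∑_{t=2}^{k-1} a_t, then for every k ≥ 2, a_k ≤ (4C₁/(1-3p))·(1/k²). -/

import Mathlib

open Finset

theorem stmt_0 (a : ℕ → ℝ) (C₁ p : ℝ)
    (ha : ∀ k : ℕ, 2 ≤ k → 0 ≤ a k)
    (hC : 0 ≤ C₁) (hp0 : 0 < p) (hp1 : p < 1/3)
    (hrec : ∀ k : ℕ, 2 ≤ k →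
      (k : ℝ)^2 / 4 * a k ≤ C₁ + p / (1 - p) * ∑ t ∈ Finset.Ico 2 k, a t) :
    ∀ k : ℕ, 2 ≤ k → a k ≤ 4 * C₁ / (1 - 3 * p) * (1 / (k : ℝ)^2) := by
  have hp1' : (0:ℝ) < 1 - 3*p := by linarith
  have hpp : (0:ℝ) < 1 - p := by linarith
  set M := 4 * C₁ / (1 - 3*p) with hM
  have hMnn : 0 ≤ M := by positivity
  have hMeq : (1 - 3*p) * M = 4 * C₁ := by
    rw [hM]; field_simp
  have hC1M : 4*C₁ + 2*p*M ≤ (1-p)*M := by nlinarith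
  have ha2 : a 2 ≤ C₁ := by
    have h := hrec 2 le_rfl
    simp at h
    norm_num at h
    linarith
  have hsum : ∀ k : ℕ, 3 ≤ k → ∑ t ∈ Finset.Ico 3 k, 1/(t:ℝ)^2 ≤ 1/2 - 1/((k:ℝ)-1) := by
    intro k hk
    induction k, hk using Nat.le_induction with
    | base => norm_num
    | succ k hk ih =>
      rw [Finset.sum_Ico_succ_top (by omega)]
      have hk2 : (3:ℝ) ≤ (k:ℝ) := by exact_mod_cast hk
      have h1 : (0:ℝ) < (k:ℝ) - 1 := by linarith
      have h2 : (0:ℝ) < (k:ℝ) := by linarith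
      have key : 1/(k:ℝ)^2 ≤ 1/((k:ℝ)-1) - 1/(k:ℝ) := by
        have heq : 1/((k:ℝ)-1) - 1/(k:ℝ) = 1/(((k:ℝ)-1)*(k:ℝ)) := by
          field_simp
          ring
        rw [heq]
        apply one_div_le_one_div_of_le (by positivity)
        nlinarith
      push_cast
      have : ((k:ℝ) + 1) - 1 = (k:ℝ) := by ring
      rw [this]
      linarith
  have main : ∀ k : ℕ, ∀ j : ℕ, 2 ≤ j → j ≤ k → a j ≤ M / (j:ℝ)^2 := by
    intro k
    induction k with
    | zero => intro j hj hjk; omega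
    | succ k ih =>
      intro j hj hjk
      rcases lt_or_eq_of_le hjk with h | h
      · exact ih j hj (by omega)
      · by_cases hj2 : j = 2
        · subst hj2
          have h4 : 4*C₁ ≤ M := by nlinarith
          have hc : ((2:ℕ):ℝ)^2 = 4 := by norm_num
          rw [hc]
          linarith
        · have hj3 : 3 ≤ j := by omega
          have hsumA : ∑ t ∈ Finset.Ico 2 j, a t ≤ C₁ + M * (1/2) := by
            rw [Finset.sum_eq_sum_Ico_succ_bot (by omega : 2 < j)]
            have hb : ∑ t ∈ Finset.Ico 3 j, a t ≤ ∑ t ∈ Finset.Ico 3 j, M * (1/(t:ℝ)^2) := by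
              apply Finset.sum_le_sum
              intro t ht
              simp only [Finset.mem_Ico] at ht
              have := ih t (by omega) (by omega)
              rw [mul_one_div]
              exact this
            have hs := hsum j hj3
            have hj1 : (0:ℝ) < (j:ℝ) - 1 := by
              have : (3:ℝ) ≤ (j:ℝ) := by exact_mod_cast hj3
              linarith
            have hb2 : ∑ t ∈ Finset.Ico 3 j, M * (1/(t:ℝ)^2) ≤ M * (1/2) := by
              rw [← Finset.mul_sum]
              have h12 : ∑ t ∈ Finset.Ico 3 j, 1/(t:ℝ)^2 ≤ 1/2 := by
                have : 0 < 1/((j:ℝ)-1) := by positivity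
                linarith
              nlinarith
            linarith
          have hr := hrec j (by omega)
          have hq : 0 ≤ p / (1-p) := by positivity
          have h4 : p/(1-p)*(C₁ + M*(1/2)) ≤ M/4 - C₁ := by
            rw [div_mul_eq_mul_div, div_le_iff₀ hpp]
            nlinarith
          have hstep : (j:ℝ)^2/4 * a j ≤ M/4 := by
            calc (j:ℝ)^2/4 * a j ≤ C₁ + p/(1-p) * ∑ t ∈ Finset.Ico 2 j, a t := hr
              _ ≤ C₁ + p/(1-p) * (C₁ + M*(1/2)) := by
                  gcongr
              _ ≤ M/4 := by linarith
          have hjpos : (0:ℝ) < (j:ℝ)^2 := by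
            have : (2:ℝ) ≤ (j:ℝ) := by exact_mod_cast hj
            positivity
          rw [le_div_iff₀ hjpos]
          nlinarith
  intro k hk
  have := main k k hk le_rfl
  rw [mul_one_div]
  exact this
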